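/- Let U ⊆ ℂ be open and let f be holomorphic on U. Then there exists a function G of two complex variables, holomorphic on U × U, such that G(u, w)·(u − w) = f(u) − f(w) for all u, w ∈ U and G(u, u) = f'(u) for all u ∈ U. If moreover f is injective and f' is nowhere zero on U, then G(u, w) ≠ 0 for all u, w ∈ U. (This is the regularity of the difference quotient (f(u)−f(w))/(u−w) underlying the definition of the Grunsky coefficients.) -/

import Mathlib

open Metric Filter Finset
open scoped ENNReal NNReal Topology

noncomputable def diffQuot (f : ℂ → ℂ) (p : ℂ × ℂ) : ℂ :=
  if p.1 = p.2 then deriv f p.1 else (f p.1 - f p.2) / (p.1 - p.2)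

/-- Fréchet derivative of the two-variable monomial `(u-a)^i (w-a)^j`. -/
noncomputable def monoD (a : ℂ) (i j : ℕ) (q : ℂ × ℂ) : ℂ × ℂ →L[ℂ] ℂ :=
  (q.1 - a) ^ i • (((j : ℂ) * (q.2 - a) ^ (j - 1)) • ContinuousLinearMap.snd ℂ ℂ ℂ) +
  (q.2 - a) ^ j • (((i : ℂ) * (q.1 - a) ^ (i - 1)) • ContinuousLinearMap.fst ℂ ℂ ℂ)

lemma monoD_hasFDerivAt (a : ℂ) (i j : ℕ) (q : ℂ × ℂ) :
    HasFDerivAt (fun q : ℂ × ℂ => (q.1 - a) ^ i * (q.2 - a) ^ j) (monoD a i j q) q := by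
  have h1 : HasDerivAt (fun x : ℂ => (x - a) ^ i) ((i : ℂ) * (q.1 - a) ^ (i - 1)) q.1 := by
    simpa using ((hasDerivAt_id q.1).sub_const a).fun_pow i
  have h2 : HasDerivAt (fun x : ℂ => (x - a) ^ j) ((j : ℂ) * (q.2 - a) ^ (j - 1)) q.2 := by
    simpa using ((hasDerivAt_id q.2).sub_const a).fun_pow j
  have hA : HasFDerivAt (fun q : ℂ × ℂ => (q.1 - a) ^ i)
      (((i : ℂ) * (q.1 - a) ^ (i - 1)) • ContinuousLinearMap.fst ℂ ℂ ℂ) q :=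
    h1.comp_hasFDerivAt q hasFDerivAt_fst
  have hB : HasFDerivAt (fun q : ℂ × ℂ => (q.2 - a) ^ j)
      (((j : ℂ) * (q.2 - a) ^ (j - 1)) • ContinuousLinearMap.snd ℂ ℂ ℂ) q :=
    h2.comp_hasFDerivAt q hasFDerivAt_snd
  exact hA.mul hB

lemma monoD_norm_le (a : ℂ) (i j : ℕ) (q : ℂ × ℂ) {ρ : ℝ} (hρ : 0 ≤ ρ)
    (hx : ‖q.1 - a‖ ≤ ρ) (hy : ‖q.2 - a‖ ≤ ρ) :
    ‖monoD a i j q‖ ≤ (i + j) * ρ ^ (i + j - 1) := by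
  have key : ∀ (x y : ℂ) (i j : ℕ) (L : ℂ × ℂ →L[ℂ] ℂ), ‖L‖ ≤ 1 → ‖x‖ ≤ ρ → ‖y‖ ≤ ρ →
      ‖x ^ i • (((j : ℂ) * y ^ (j - 1)) • L)‖ ≤ (j : ℝ) * ρ ^ (i + j - 1) := by
    intro x y i j L hL hx hy
    have c1 : ‖x ^ i • (((j : ℂ) * y ^ (j - 1)) • L)‖
        ≤ ‖x ^ i‖ * ‖((j : ℂ) * y ^ (j - 1)) • L‖ :=
          norm_smul_le (x ^ i) (((j : ℂ) * y ^ (j - 1)) • L)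
    have c2 : ‖((j : ℂ) * y ^ (j - 1)) • L‖ ≤ ‖(j : ℂ) * y ^ (j - 1)‖ * ‖L‖ :=
      norm_smul_le ((j : ℂ) * y ^ (j - 1)) L
    have c3 : ‖(j : ℂ) * y ^ (j - 1)‖ = (j : ℝ) * ‖y‖ ^ (j - 1) := by
      rw [norm_mul, norm_pow]; simp
    calc ‖x ^ i • (((j : ℂ) * y ^ (j - 1)) • L)‖
        ≤ ‖x ^ i‖ * ‖((j : ℂ) * y ^ (j - 1)) • L‖ := c1
      _ ≤ ‖x ^ i‖ * (‖(j : ℂ) * y ^ (j - 1)‖ * ‖L‖) :=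
          mul_le_mul_of_nonneg_left c2 (norm_nonneg _)
      _ = ‖x‖ ^ i * ((j : ℝ) * ‖y‖ ^ (j - 1) * ‖L‖) := by rw [norm_pow, c3]
      _ ≤ ρ ^ i * ((j : ℝ) * ρ ^ (j - 1) * 1) := by gcongr
      _ = (j : ℝ) * (ρ ^ i * ρ ^ (j - 1)) := by ring
      _ = (j : ℝ) * ρ ^ (i + (j - 1)) := by rw [← pow_add]
      _ = (j : ℝ) * ρ ^ (i + j - 1) := by
          have h' : i + (j - 1) = i + j - 1 ∨ j = 0 := by omega
          rcases h' with h' | h'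
          · rw [h']
          · simp [h']
  have b1 := key (q.1 - a) (q.2 - a) i j (ContinuousLinearMap.snd ℂ ℂ ℂ)
    (ContinuousLinearMap.norm_snd_le ..) hx hy
  have b2 := key (q.2 - a) (q.1 - a) j i (ContinuousLinearMap.fst ℂ ℂ ℂ)
    (ContinuousLinearMap.norm_fst_le ..) hy hx
  have hrw : j + i - 1 = i + j - 1 := by omega
  rw [hrw] at b2
  calc ‖monoD a i j q‖ ≤ _ + _ := norm_add_le _ _
    _ ≤ (j : ℝ) * ρ ^ (i + j - 1) + (i : ℝ) * ρ ^ (i + j - 1) := add_le_add b1 b2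
    _ = (i + j) * ρ ^ (i + j - 1) := by ring

lemma diffQuot_diffAt_diag {U : Set ℂ} (hU : IsOpen U) {f : ℂ → ℂ}
    (hf : DifferentiableOn ℂ f U) {a : ℂ} (ha : a ∈ U) :
    DifferentiableAt ℂ (diffQuot f) (a, a) := by
  have han : AnalyticAt ℂ f a := hf.analyticAt (hU.mem_nhds ha)
  obtain ⟨p, r0, hp0⟩ := han
  obtain ⟨ε, hε, hball⟩ := Metric.isOpen_iff.mp hU a ha
  set r : ℝ≥0∞ := min (min r0 (ENNReal.ofReal ε)) 1 with hrdef
  have hrpos : 0 < r := lt_min (lt_min hp0.r_pos (by simp [hε])) zero_lt_one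
  have hr0 : r ≤ r0 := (min_le_left _ _).trans (min_le_left _ _)
  have hrε : r ≤ ENNReal.ofReal ε := (min_le_left _ _).trans (min_le_right _ _)
  have hr1 : r ≤ 1 := min_le_right _ _
  have hrtop : r ≠ ⊤ := (hr1.trans_lt (by norm_num)).ne
  have hp : HasFPowerSeriesOnBall f p a r := hp0.mono hrpos hr0
  set s : ℝ := r.toReal with hsdef
  have hs0 : 0 < s := ENNReal.toReal_pos hrpos.ne' hrtop
  have hs1 : s ≤ 1 := by
    have := ENNReal.toReal_mono (by norm_num : (1 : ℝ≥0∞) ≠ ⊤) hr1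
    simpa using this
  have hofs : ENNReal.ofReal s = r := ENNReal.ofReal_toReal hrtop
  have hsε : s ≤ ε := by
    have := ENNReal.toReal_mono ENNReal.ofReal_ne_top hrε
    rwa [ENNReal.toReal_ofReal hε.le] at this
  set ρ : ℝ := s / 2 with hρdef
  have hρ0 : 0 < ρ := by positivity
  have hρ1 : ρ ≤ 1 := by rw [hρdef]; linarith
  have hballU : Metric.ball a ρ ⊆ U := fun z hz => hball (Metric.mem_ball.mpr
    (lt_of_lt_of_le (Metric.mem_ball.mp hz) (by rw [hρdef]; linarith)))
  have hmem : ∀ u : ℂ, u ∈ Metric.ball a ρ → u - a ∈ Metric.eball (0 : ℂ) r := by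
    intro u hu
    rw [Metric.mem_eball, edist_dist, dist_zero_right, ← hofs]
    exact (ENNReal.ofReal_lt_ofReal_iff hs0).mpr
      (lt_of_lt_of_le (mem_ball_iff_norm.mp hu) (by rw [hρdef]; linarith))
  set c : ℕ → ℂ := fun n => p.coeff n with hcdef
  have hsum : ∀ u ∈ Metric.ball a ρ, HasSum (fun n => c n * (u - a) ^ n) (f u) := by
    intro u hu
    have h1 := hp.hasSum (hmem u hu)
    have h2 : a + (u - a) = u := by ring
    rw [h2] at h1
    have h3 : (fun n => p n fun _ => u - a) = fun n => c n * (u - a) ^ n := by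
      ext n
      rw [p.apply_eq_pow_smul_coeff, smul_eq_mul, mul_comm]
    rwa [h3] at h1
  -- summable bound
  set σ : ℝ := 3 * s / 4 with hσdef
  have hσ0 : 0 < σ := by positivity
  set σnn : ℝ≥0 := ⟨σ, hσ0.le⟩ with hσnndef
  have hσrad : (σnn : ℝ≥0∞) < p.radius := by
    calc (σnn : ℝ≥0∞) = ENNReal.ofReal σ :=
          (ENNReal.ofReal_eq_coe_nnreal hσ0.le).symm
      _ < ENNReal.ofReal s := (ENNReal.ofReal_lt_ofReal_iff hs0).mpr (by rw [hσdef]; linarith)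
      _ = r := hofs
      _ ≤ r0 := hr0
      _ ≤ p.radius := hp0.r_le
  have hSσ : Summable fun n => ‖c n‖ * σ ^ n := by
    have := p.summable_norm_mul_pow hσrad
    simp only [p.norm_apply_eq_norm_coef] at this; exact this
  set C : ℝ := ∑' n, ‖c n‖ * σ ^ n with hCdef
  have hC : ∀ n, ‖c n‖ * σ ^ n ≤ C := fun n => Summable.le_tsum hSσ n (fun j _ => by positivity)
  set ub : ℕ → ℝ := fun n => ‖c n‖ * ((n : ℝ) * n) * ρ ^ (n - 2) with hubdef
  have hρσ : ρ = (2 / 3) * σ := by rw [hρdef, hσdef]; ring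
  have hub : Summable ub := by
    refine Summable.of_nonneg_of_le (fun n => by positivity)
      (fun n => ?_) (((summable_pow_mul_geometric_of_norm_lt_one 2
        (by norm_num : ‖(2/3 : ℝ)‖ < 1))).mul_left (C / ρ ^ 2))
    have e1 : ρ ^ (n - 2) ≤ ρ ^ n / ρ ^ 2 := by
      rw [le_div_iff₀ (by positivity), ← pow_add]
      exact pow_le_pow_of_le_one hρ0.le hρ1 (by omega)
    have e2 : ‖c n‖ * ρ ^ n ≤ C * (2/3) ^ n := by
      rw [hρσ, mul_pow, ← mul_assoc]
      calc ‖c n‖ * (2/3 : ℝ) ^ n * σ ^ n = (‖c n‖ * σ ^ n) * (2/3) ^ n := by ring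
        _ ≤ C * (2/3) ^ n := by
            have := hC n
            have h23 : (0:ℝ) ≤ (2/3 : ℝ) ^ n := by positivity
            nlinarith
    calc ub n = ‖c n‖ * ((n : ℝ) * n) * ρ ^ (n - 2) := rfl
      _ ≤ ‖c n‖ * ((n : ℝ) * n) * (ρ ^ n / ρ ^ 2) := by gcongr
      _ = (‖c n‖ * ρ ^ n) * ((n : ℝ) * n) / ρ ^ 2 := by ring
      _ ≤ (C * (2/3) ^ n) * ((n : ℝ) * n) / ρ ^ 2 := by gcongr
      _ = C / ρ ^ 2 * ((n : ℝ) ^ 2 * (2/3) ^ n) := by ring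
  -- the series
  set g : ℕ → ℂ × ℂ → ℂ :=
    fun n q => c n * ∑ i ∈ Finset.range n, (q.1 - a) ^ i * (q.2 - a) ^ (n - 1 - i) with hgdef
  set g' : ℕ → ℂ × ℂ → ℂ × ℂ →L[ℂ] ℂ :=
    fun n q => c n • ∑ i ∈ Finset.range n, monoD a i (n - 1 - i) q with hg'def
  set s2 : Set (ℂ × ℂ) := Metric.ball a ρ ×ˢ Metric.ball a ρ with hs2def
  have hs2open : IsOpen s2 := isOpen_ball.prod isOpen_ball
  have hs2conn : IsPreconnected s2 := ((convex_ball a ρ).prod (convex_ball a ρ)).isPreconnected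
  have hx0mem : ((a, a) : ℂ × ℂ) ∈ s2 := ⟨mem_ball_self hρ0, mem_ball_self hρ0⟩
  have hgderiv : ∀ (n : ℕ) (x : ℂ × ℂ), x ∈ s2 → HasFDerivAt (g n) (g' n x) x := by
    intro n x _
    simp only [hgdef, hg'def]
    exact (HasFDerivAt.fun_sum (fun i _ => monoD_hasFDerivAt a i (n - 1 - i) x)).const_mul (c n)
  have hgbound : ∀ (n : ℕ) (x : ℂ × ℂ), x ∈ s2 → ‖g' n x‖ ≤ ub n := by
    intro n x hx
    obtain ⟨hx1, hx2⟩ := hx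
    have hx1' : ‖x.1 - a‖ ≤ ρ := (mem_ball_iff_norm.mp hx1).le
    have hx2' : ‖x.2 - a‖ ≤ ρ := (mem_ball_iff_norm.mp hx2).le
    rw [hg'def]
    calc ‖c n • ∑ i ∈ Finset.range n, monoD a i (n - 1 - i) x‖ ≤ ‖c n‖ * ‖∑ i ∈ Finset.range n, monoD a i (n - 1 - i) x‖ :=
          norm_smul_le (c n) (∑ i ∈ Finset.range n, monoD a i (n - 1 - i) x)
      _ ≤ ‖c n‖ * ∑ i ∈ Finset.range n, ‖monoD a i (n - 1 - i) x‖ :=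
          mul_le_mul_of_nonneg_left (norm_sum_le _ _) (norm_nonneg _)
      _ ≤ ‖c n‖ * ∑ _i ∈ Finset.range n, ((n : ℝ) * ρ ^ (n - 2)) := by
          gcongr with i hi
          have hi' := Finset.mem_range.mp hi
          refine (monoD_norm_le a i (n - 1 - i) x hρ0.le hx1' hx2').trans ?_
          have hexp : i + (n - 1 - i) - 1 = n - 2 := by omega
          have hco : (i : ℝ) + ((n - 1 - i : ℕ) : ℝ) ≤ (n : ℝ) := by
            exact_mod_cast (by omega : i + (n - 1 - i) ≤ n)
          rw [hexp]
          exact mul_le_mul_of_nonneg_right hco (by positivity)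
      _ = ub n := by
          rw [Finset.sum_const, Finset.card_range, nsmul_eq_mul, hubdef]
          ring
  have hf0 : Summable fun n => g n ((a : ℂ), (a : ℂ)) := by
    apply summable_of_ne_finset_zero (s := {1})
    intro n hn
    simp only [Finset.mem_singleton] at hn
    have hzero : ∀ i ∈ Finset.range n, ((a : ℂ) - a) ^ i * ((a : ℂ) - a) ^ (n - 1 - i) = 0 := by
      intro i hi
      have hi' := Finset.mem_range.mp hi
      rw [sub_self]
      rcases Nat.eq_zero_or_pos i with hi0 | hip
      · rw [hi0, pow_zero, one_mul, zero_pow (by omega)]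
      · rw [zero_pow hip.ne', zero_mul]
    simp only [hgdef]
    rw [Finset.sum_eq_zero hzero, mul_zero]
  have key : ∀ x ∈ s2, HasFDerivAt (fun q => ∑' n, g n q) (∑' n, g' n x) x := fun x hx =>
    hasFDerivAt_tsum_of_isPreconnected hub hs2open hs2conn hgderiv hgbound hx0mem hf0 hx
  set Ga : ℂ × ℂ → ℂ := fun q => ∑' n, g n q with hGadef
  have h_off : ∀ u ∈ Metric.ball a ρ, ∀ w ∈ Metric.ball a ρ,
      Ga (u, w) * (u - w) = f u - f w := by
    intro u hu w hw
    have hsx := hsum u hu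
    have hsy := hsum w hw
    have hterm : ∀ n : ℕ, g n (u, w) * (u - w) = c n * (u - a) ^ n - c n * (w - a) ^ n := by
      intro n
      have hxy : (u - a) - (w - a) = u - w := by ring
      calc g n (u, w) * (u - w)
          = c n * ((∑ i ∈ Finset.range n, (u - a) ^ i * (w - a) ^ (n - 1 - i))
              * ((u - a) - (w - a))) := by rw [hxy, hgdef, mul_assoc]
        _ = c n * ((u - a) ^ n - (w - a) ^ n) := by rw [geom_sum₂_mul]
        _ = _ := by ring
    calc Ga (u, w) * (u - w) = ∑' n, g n (u, w) * (u - w) := tsum_mul_right.symm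
      _ = ∑' n, (c n * (u - a) ^ n - c n * (w - a) ^ n) := tsum_congr hterm
      _ = f u - f w := (hsx.sub hsy).tsum_eq
  have h_diag : ∀ b ∈ Metric.ball a ρ, Ga (b, b) = deriv f b := by
    intro b hb
    have hbU : b ∈ U := hballU hb
    have hfd : HasDerivAt f (deriv f b) b := (hf.differentiableAt (hU.mem_nhds hbU)).hasDerivAt
    have l2 : Filter.Tendsto (slope f b) (nhdsWithin b {b}ᶜ) (nhds (deriv f b)) :=
      hasDerivAt_iff_tendsto_slope.mp hfd
    have l1 : Filter.Tendsto (fun u => Ga (u, b)) (nhdsWithin b {b}ᶜ) (nhds (Ga (b, b))) := by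
      have hc : ContinuousAt Ga (b, b) :=
        ((key (b, b) ⟨hb, hb⟩).differentiableAt).continuousAt
      have hpair : ContinuousAt (fun u : ℂ => (u, b)) b :=
        (continuous_id.prodMk continuous_const).continuousAt
      have : ContinuousAt (fun u : ℂ => Ga (u, b)) b :=
        ContinuousAt.comp (f := fun u : ℂ => (u, b)) hc hpair
      exact this.tendsto.mono_left nhdsWithin_le_nhds
    have heq : (fun u => Ga (u, b)) =ᶠ[nhdsWithin b {b}ᶜ] slope f b := by
      have hball_ev : ∀ᶠ u in nhdsWithin b {b}ᶜ, u ∈ Metric.ball a ρ :=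
        eventually_nhdsWithin_of_eventually_nhds (isOpen_ball.eventually_mem hb)
      filter_upwards [hball_ev, self_mem_nhdsWithin] with u hu hub
      have hub' : u ≠ b := hub
      rw [slope_def_field, eq_div_iff (sub_ne_zero.mpr hub')]
      exact h_off u hu b hb
    exact tendsto_nhds_unique (l1.congr' heq) l2
  have hGaeq : ∀ x ∈ s2, diffQuot f x = Ga x := by
    rintro ⟨u, w⟩ ⟨hu, hw⟩
    by_cases h : u = w
    · subst h
      simp only [diffQuot, if_pos rfl]
      exact (h_diag u hu).symm
    · simp only [diffQuot]
      rw [if_neg h]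
      exact (div_eq_iff (sub_ne_zero.mpr h)).mpr (h_off u hu w hw).symm
  have hGadiff : DifferentiableAt ℂ Ga (a, a) := (key (a, a) hx0mem).differentiableAt
  refine hGadiff.congr_of_eventuallyEq ?_
  filter_upwards [hs2open.mem_nhds hx0mem] with x hx
  exact hGaeq x hx

theorem difference_quotient_regular (U : Set ℂ) (hU : IsOpen U) (f : ℂ → ℂ)
    (hf : DifferentiableOn ℂ f U) :
    ∃ G : ℂ × ℂ → ℂ, DifferentiableOn ℂ G (U ×ˢ U) ∧
      (∀ u ∈ U, ∀ w ∈ U, G (u, w) * (u - w) = f u - f w) ∧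
      (∀ u ∈ U, G (u, u) = deriv f u) ∧
      (Set.InjOn f U → (∀ u ∈ U, deriv f u ≠ 0) →
        ∀ u ∈ U, ∀ w ∈ U, G (u, w) ≠ 0) := by
  refine ⟨diffQuot f, ?_, ?_, ?_, ?_⟩
  · rintro ⟨u, w⟩ hp
    rw [Set.mem_prod] at hp
    by_cases h : u = w
    · subst h
      exact (diffQuot_diffAt_diag hU hf hp.1).differentiableWithinAt
    · have hq : DifferentiableAt ℂ (fun p : ℂ × ℂ => (f p.1 - f p.2) / (p.1 - p.2)) (u, w) := by
        have d1 : DifferentiableAt ℂ (fun p : ℂ × ℂ => f p.1) (u, w) :=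
          (hf.differentiableAt (hU.mem_nhds hp.1)).comp _ differentiableAt_fst
        have d2 : DifferentiableAt ℂ (fun p : ℂ × ℂ => f p.2) (u, w) :=
          (hf.differentiableAt (hU.mem_nhds hp.2)).comp _ differentiableAt_snd
        have d3 : DifferentiableAt ℂ (fun p : ℂ × ℂ => (p.1 - p.2)⁻¹) (u, w) := by
          have h3 : DifferentiableAt ℂ (fun p : ℂ × ℂ => p.1 - p.2) (u, w) :=
            differentiableAt_fst.sub differentiableAt_snd
          exact (differentiableAt_inv (sub_ne_zero.mpr h)).comp (u, w) h3
        simp only [div_eq_mul_inv]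
        exact (d1.sub d2).mul d3
      refine (hq.congr_of_eventuallyEq ?_).differentiableWithinAt
      have hopen : IsOpen {p : ℂ × ℂ | p.1 ≠ p.2} := isOpen_ne_fun continuous_fst continuous_snd
      filter_upwards [hopen.mem_nhds (by exact h)] with p hp'
      simp [diffQuot, if_neg hp']
  · intro u hu w hw
    by_cases h : u = w
    · subst h; simp [diffQuot]
    · simp only [diffQuot, if_neg h]
      exact div_mul_cancel₀ _ (sub_ne_zero.mpr h)
  · intro u hu; simp [diffQuot]
  · intro hinj hder u hu w hw
    by_cases h : u = w
    · subst h; simpa [diffQuot] using hder u hu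
    · intro h0
      have h1 : diffQuot f (u, w) * (u - w) = f u - f w := by
        simp only [diffQuot, if_neg h]
        exact div_mul_cancel₀ _ (sub_ne_zero.mpr h)
      rw [h0, zero_mul] at h1
      exact sub_ne_zero.mpr (fun heq => h (hinj hu hw heq)) h1.symm
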